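/- arXiv:2103.06075 — 2 statements merged into one kernel-verified Lean document; each statement's English description precedes it below -/
import Mathlib

section
/- Let {Y_{ij}}_{i≥1, j≥1} be an array of independent and identically distributed random variables with E(Y_{11}) = 0, E(Y_{11}²) = 1 and E|Y_{11}|^r < ∞ for some r ≥ 3. Let X_{in} = n^{-1/2} Σ_{j=1}^n Y_{ij}. Then for any ε > 0, max_{1≤i≤n} |X_{in}| = O_p(n^{1/(2r)+ε}); in particular, for every α > 0, P(max_{1≤i≤n} |X_{in}| ≥ α n^{1/(2r)+ε}) → 0 as n → ∞. -/
open MeasureTheory ProbabilityTheory Filter Real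
open scoped BigOperators NNReal ENNReal Topology
set_option maxHeartbeats 2000000

lemma exp_quad {x : ℝ} (hx : |x| ≤ 1) : Real.exp x ≤ 1 + x + x ^ 2 := by
  have h := Real.exp_bound hx (n := 2) (by norm_num)
  have h2 : ∑ m ∈ Finset.range 2, x ^ m / (m.factorial : ℝ) = 1 + x := by
    simp [Finset.sum_range_succ]
  rw [h2] at h
  have h3 : |x| ^ 2 * ((2:ℕ).succ / ((2:ℕ).factorial * (2:ℕ)) : ℝ) = x ^ 2 * (3/4) := by
    rw [sq_abs]; norm_num [Nat.factorial]
  rw [h3] at h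
  have := abs_le.1 h
  nlinarith [sq_nonneg x]

lemma integrable_bdd {Ω : Type} [MeasurableSpace Ω] (P : Measure Ω) [IsProbabilityMeasure P]
    {f : Ω → ℝ} (hf : Measurable f) {C : ℝ} (h : ∀ ω, |f ω| ≤ C) : Integrable f P :=
  Integrable.mono' (integrable_const C) hf.aestronglyMeasurable
    (ae_of_all _ fun ω => by simpa [Real.norm_eq_abs] using h ω)

lemma mgf_le_of_bdd {Ω : Type} [MeasurableSpace Ω] (P : Measure Ω) [IsProbabilityMeasure P]
    {V : Ω → ℝ} (hVm : Measurable V) {b : ℝ} (hb : 0 < b)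
    (hbd : ∀ ω, |V ω| ≤ b) (h0 : ∫ ω, V ω ∂P = 0) (h2 : ∫ ω, (V ω) ^ 2 ∂P ≤ 1)
    {t : ℝ} (ht0 : 0 ≤ t) (htb : t * b ≤ 1) :
    mgf V P t ≤ Real.exp (t ^ 2) := by
  have hptws : ∀ ω, Real.exp (t * V ω) ≤ 1 + t * V ω + (t * V ω) ^ 2 := by
    intro ω
    apply exp_quad
    rw [abs_mul, abs_of_nonneg ht0]
    calc t * |V ω| ≤ t * b := by gcongr; exact hbd ω
    _ ≤ 1 := htb
  have hVint : Integrable V P := integrable_bdd P hVm hbd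
  have hV2int : Integrable (fun ω => (V ω)^2) P := by
    refine integrable_bdd P (hVm.pow_const 2) (C := b^2) fun ω => ?_
    rw [abs_pow] ; exact pow_le_pow_left₀ (abs_nonneg _) (hbd ω) 2
  have hint : Integrable (fun ω => 1 + t * V ω + (t * V ω)^2) P := by
    have : (fun ω => 1 + t * V ω + (t * V ω)^2)
        = fun ω => (1 + t * V ω) + t^2 * (V ω)^2 := by
      funext ω; ring
    rw [this]
    exact ((integrable_const 1).add (hVint.const_mul _)).add (hV2int.const_mul _)
  have hmgf : mgf V P t ≤ 1 + t^2 := by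
    rw [mgf]
    calc ∫ ω, Real.exp (t * V ω) ∂P ≤ ∫ ω, (1 + t * V ω + (t * V ω)^2) ∂P := by
          refine integral_mono ?_ hint hptws
          exact integrable_bdd P ((hVm.const_mul _).exp) (C := Real.exp 1) fun ω => by
            rw [abs_of_pos (Real.exp_pos _), Real.exp_le_exp]
            calc t * V ω ≤ |t * V ω| := le_abs_self _
            _ ≤ 1 := by
                rw [abs_mul, abs_of_nonneg ht0]
                calc t * |V ω| ≤ t * b := by gcongr; exact hbd ω
                _ ≤ 1 := htb
      _ = 1 + t * ∫ ω, V ω ∂P + t^2 * ∫ ω, (V ω)^2 ∂P := by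
          have : (fun ω => 1 + t * V ω + (t * V ω)^2)
              = fun ω => (1 + t * V ω) + t^2 * (V ω)^2 := by funext ω; ring
          have h1 : Integrable (fun ω => (1:ℝ) + t * V ω) P := by
            exact (integrable_const 1).add (hVint.const_mul _)
          have hmul : Integrable (fun ω => t^2 * (V ω)^2) P := by
            exact hV2int.const_mul _
          have h3 : Integrable (fun ω => t * V ω) P := by
            exact hVint.const_mul _
          rw [this, integral_add h1 hmul, integral_add (integrable_const 1) h3,
              integral_const, integral_const_mul, integral_const_mul]
          simp
      _ ≤ 1 + t^2 := by
          rw [h0, mul_zero, add_zero]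
          nlinarith [sq_nonneg t]
  calc mgf V P t ≤ 1 + t^2 := hmgf
  _ ≤ Real.exp (t^2) := by linarith [Real.add_one_le_exp (t^2)]

lemma bern_sum {Ω : Type} [MeasurableSpace Ω] (P : Measure Ω) [IsProbabilityMeasure P]
    (V : ℕ → Ω → ℝ) (n : ℕ) {b : ℝ} (hb : 0 < b)
    (hm : ∀ j, Measurable (V j))
    (hind : iIndepFun V P)
    (hbd : ∀ j ω, |V j ω| ≤ b)
    (h0 : ∀ j, ∫ ω, V j ω ∂P = 0)
    (h2 : ∀ j, ∫ ω, (V j ω) ^ 2 ∂P ≤ 1)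
    {t : ℝ} (ht0 : 0 ≤ t) (htb : t * b ≤ 1)
    (s : ℝ) :
    P {ω | s ≤ ∑ j ∈ Finset.range n, V j ω} ≤
      ENNReal.ofReal (Real.exp (-(t*s) + n * t^2)) := by
  have hexpint : ∀ j, Integrable (fun ω => Real.exp (t * V j ω)) P := by
    intro j
    refine integrable_bdd P (((hm j).const_mul _).exp) (C := Real.exp 1) fun ω => ?_
    rw [abs_of_pos (Real.exp_pos _), Real.exp_le_exp]
    calc t * V j ω ≤ |t * V j ω| := le_abs_self _
    _ ≤ 1 := by
        rw [abs_mul, abs_of_nonneg ht0]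
        calc t * |V j ω| ≤ t * b := by gcongr; exact hbd j ω
        _ ≤ 1 := htb
  have hsumint : Integrable (fun ω => Real.exp (t * (∑ j ∈ Finset.range n, V j) ω)) P :=
    hind.integrable_exp_mul_sum hm (fun j _ => hexpint j)
  have hset : {ω | s ≤ ∑ j ∈ Finset.range n, V j ω}
      = {ω | s ≤ (∑ j ∈ Finset.range n, V j) ω} := by
    simp [Finset.sum_apply]
  have hchern := measure_ge_le_exp_mul_mgf (X := ∑ j ∈ Finset.range n, V j) (μ := P)
    (t := t) s ht0 hsumint
  have hmgf : mgf (∑ j ∈ Finset.range n, V j) P t ≤ Real.exp (n * t^2) := by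
    rw [hind.mgf_sum hm]
    calc ∏ j ∈ Finset.range n, mgf (V j) P t
        ≤ ∏ j ∈ Finset.range n, Real.exp (t^2) := by
          refine Finset.prod_le_prod (fun j _ => mgf_nonneg) fun j _ =>
            mgf_le_of_bdd P (hm j) hb (hbd j) (h0 j) (h2 j) ht0 htb
      _ = Real.exp (n * t^2) := by
          rw [Finset.prod_const, Finset.card_range, ← Real.exp_nat_mul]
  have hfin : P {ω | s ≤ ∑ j ∈ Finset.range n, V j ω} ≠ ⊤ := measure_ne_top _ _
  rw [ENNReal.le_ofReal_iff_toReal_le hfin (Real.exp_nonneg _), hset]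
  calc (P {ω | s ≤ (∑ j ∈ Finset.range n, V j) ω}).toReal
      ≤ Real.exp (-t * s) * mgf (∑ j ∈ Finset.range n, V j) P t := hchern
    _ ≤ Real.exp (-t * s) * Real.exp (n * t^2) := by
        gcongr
    _ = Real.exp (-(t*s) + n * t^2) := by
        rw [← Real.exp_add]; congr 1; ring

lemma row_indep {Ω : Type} [MeasurableSpace Ω] {P : Measure Ω}
    {Y : ℕ → ℕ → Ω → ℝ}
    (hiid : iIndepFun
      (fun p : ℕ × ℕ => Y p.1 p.2) P) (i : ℕ) :
    iIndepFun (fun j => Y i j) P := by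
  rw [iIndepFun_iff_measure_inter_preimage_eq_mul]
  intro S sets hsets
  classical
  let e : ℕ ↪ ℕ × ℕ := ⟨fun j => (i, j), fun a b h => by simpa [Prod.ext_iff] using h⟩
  have h := hiid.measure_inter_preimage_eq_mul (S.map e) (sets := fun p => sets p.2)
    (fun p hp => by
      rcases Finset.mem_map.1 hp with ⟨j, hj, rfl⟩
      exact hsets j hj)
  have hset : (⋂ p ∈ S.map e, (fun ω => Y p.1 p.2 ω) ⁻¹' sets p.2)
      = ⋂ j ∈ S, (Y i j) ⁻¹' sets j := by
    ext ω
    simp only [Set.mem_iInter, Finset.mem_map, Set.mem_preimage]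
    constructor
    · intro h j hj
      exact h (e j) ⟨j, hj, rfl⟩
    · rintro h p ⟨j, hj, rfl⟩
      exact h j hj
  have hprod : (∏ p ∈ S.map e, P ((fun ω => Y p.1 p.2 ω) ⁻¹' sets p.2))
      = ∏ j ∈ S, P ((Y i j) ⁻¹' sets j) := by
    rw [Finset.prod_map]
    rfl
  rw [hset, hprod] at h
  exact h

lemma row_bound {Ω : Type} [MeasurableSpace Ω] (P : Measure Ω) [IsProbabilityMeasure P]
    (W : Ω → ℝ) (hWm : Measurable W)
    (hmean : ∫ ω, W ω ∂P = 0)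
    (hWint : Integrable W P)
    (hW2 : Integrable (fun ω => (W ω)^2) P)
    (hvar : ∫ ω, (W ω)^2 ∂P = 1)
    (r : ℝ) (hr : 3 ≤ r)
    (hmom : Integrable (fun ω => |W ω| ^ r) P)
    (Z : ℕ → Ω → ℝ) (hZm : ∀ j, Measurable (Z j))
    (hind : iIndepFun Z P)
    (hid : ∀ j, IdentDistrib (Z j) W P P)
    (n : ℕ) (a c : ℝ) (ha : 1 ≤ a)
    (hshift : (n:ℝ) * ((∫ ω, |W ω| ^ r ∂P) / a ^ (r - 1)) ≤ c / 2)
    {t : ℝ} (ht0 : 0 ≤ t) (htb : t * (2*a) ≤ 1) :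
    P {ω | c ≤ |∑ j ∈ Finset.range n, Z j ω|} ≤
      ENNReal.ofReal ((n:ℝ) * ((∫ ω, |W ω| ^ r ∂P) / a ^ r)
        + 2 * Real.exp (-(t*(c/2)) + n * t^2)) := by
  classical
  have ha0 : (0:ℝ) < a := lt_of_lt_of_le one_pos ha
  set R : ℝ := ∫ ω, |W ω| ^ r ∂P with hR
  have hR0 : 0 ≤ R := integral_nonneg fun ω => Real.rpow_nonneg (abs_nonneg _) r
  set φ : ℝ → ℝ := fun x => if |x| ≤ a then x else 0 with hφ
  have hφm : Measurable φ :=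
    Measurable.ite (measurableSet_le measurable_id.abs measurable_const)
      measurable_id measurable_const
  have hφ_le : ∀ x, |φ x| ≤ a := by
    intro x
    by_cases h : |x| ≤ a
    · simp only [hφ, if_pos h]; exact h
    · simp only [hφ, if_neg h, abs_zero]; linarith
  have hφ_sq : ∀ x, (φ x)^2 ≤ x^2 := by
    intro x
    by_cases h : |x| ≤ a
    · simp [hφ, if_pos h]
    · simp only [hφ, if_neg h]; simpa using sq_nonneg x
  have hdiff : ∀ x, |φ x - x| ≤ |x| ^ r / a ^ (r-1) := by
    intro x
    by_cases h : |x| ≤ a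
    · simp only [hφ, if_pos h, sub_self, abs_zero]
      positivity
    · push_neg at h
      simp only [hφ, if_neg (not_le.2 h), zero_sub, abs_neg, abs_abs]
      have hxpos : (0:ℝ) < |x| := lt_trans ha0 h
      rw [le_div_iff₀ (Real.rpow_pos_of_pos ha0 _)]
      calc |x| * a ^ (r-1) ≤ |x| * |x| ^ (r-1) :=
            mul_le_mul_of_nonneg_left (Real.rpow_le_rpow ha0.le h.le (by linarith)) (abs_nonneg x)
        _ = |x| ^ r := by
            nth_rewrite 1 [← Real.rpow_one |x|]
            rw [← Real.rpow_add hxpos]; ring_nf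
  have hφWint : Integrable (fun ω => φ (W ω)) P :=
    integrable_bdd P (hφm.comp hWm) fun ω => hφ_le _
  set m : ℝ := ∫ ω, φ (W ω) ∂P with hm
  have hm_abs : |m| ≤ a := by
    have := norm_integral_le_of_norm_le_const (μ := P) (f := fun ω => φ (W ω)) (C := a)
      (ae_of_all _ fun ω => by rw [Real.norm_eq_abs]; exact hφ_le _)
    simpa [Real.norm_eq_abs] using this
  have hm_small : |m| ≤ R / a ^ (r-1) := by
    have hmeq : m = ∫ ω, (φ (W ω) - W ω) ∂P := by
      rw [integral_sub hφWint hWint, hmean, sub_zero]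
    rw [hmeq]
    calc |∫ ω, (φ (W ω) - W ω) ∂P| ≤ ∫ ω, |φ (W ω) - W ω| ∂P := by
          simpa [Real.norm_eq_abs] using
            norm_integral_le_integral_norm (μ := P) (f := fun ω => φ (W ω) - W ω)
      _ ≤ ∫ ω, |W ω| ^ r / a ^ (r-1) ∂P := by
          refine integral_mono (hφWint.sub hWint).abs (hmom.div_const _) fun ω => hdiff _
      _ = R / a ^ (r-1) := integral_div _ _
  set U : ℕ → Ω → ℝ := fun j ω => φ (Z j ω) - m with hU
  have hUm : ∀ j, Measurable (U j) := fun j => (hφm.comp (hZm j)).sub measurable_const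
  have hUind : iIndepFun U P :=
    hind.comp (fun _ => fun x => φ x - m) (fun _ => hφm.sub measurable_const)
  have hUbd : ∀ j ω, |U j ω| ≤ 2*a := by
    intro j ω
    calc |φ (Z j ω) - m| ≤ |φ (Z j ω)| + |m| := abs_sub _ _
      _ ≤ a + a := add_le_add (hφ_le _) hm_abs
      _ = 2*a := by ring
  have hφZint : ∀ j, Integrable (fun ω => φ (Z j ω)) P := fun j =>
    integrable_bdd P (hφm.comp (hZm j)) fun ω => hφ_le _
  have hidφ : ∀ j (g : ℝ → ℝ), Measurable g →
      ∫ ω, g (Z j ω) ∂P = ∫ ω, g (W ω) ∂P := fun j g hg =>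
    ((hid j).comp hg).integral_eq
  have hUmean : ∀ j, ∫ ω, U j ω ∂P = 0 := by
    intro j
    rw [hU]
    rw [integral_sub (hφZint j) (integrable_const _), integral_const]
    simp only [probReal_univ, measure_univ, ENNReal.toReal_one, smul_eq_mul, one_mul]
    rw [hidφ j φ hφm, ← hm, sub_self]
  have hUvar : ∀ j, ∫ ω, (U j ω)^2 ∂P ≤ 1 := by
    intro j
    have htrans : ∫ ω, (U j ω)^2 ∂P = ∫ ω, (φ (W ω) - m)^2 ∂P :=
      hidφ j (fun x => (φ x - m)^2) ((hφm.sub measurable_const).pow_const 2)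
    rw [htrans]
    have hsq_int : Integrable (fun ω => (φ (W ω))^2) P := by
      refine integrable_bdd P ((hφm.comp hWm).pow_const 2) (C := a^2) fun ω => ?_
      rw [abs_pow]
      exact pow_le_pow_left₀ (abs_nonneg _) (hφ_le _) 2
    have hexp : (fun ω => (φ (W ω) - m)^2)
        = fun ω => ((φ (W ω))^2 - (2*m) * φ (W ω)) + m^2 := by
      funext ω; ring
    have h1 : Integrable (fun ω => (φ (W ω))^2 - (2*m) * φ (W ω)) P :=
      hsq_int.sub (hφWint.const_mul _)
    rw [hexp, integral_add h1 (integrable_const _), integral_sub hsq_int (hφWint.const_mul _),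
      integral_const_mul, integral_const]
    simp only [probReal_univ, measure_univ, ENNReal.toReal_one, smul_eq_mul, one_mul]
    have hI2 : ∫ ω, (φ (W ω))^2 ∂P ≤ 1 := by
      rw [← hvar]
      exact integral_mono hsq_int hW2 fun ω => hφ_sq _
    rw [← hm]
    nlinarith [sq_nonneg m]
  -- the inclusion
  have hincl : {ω | c ≤ |∑ j ∈ Finset.range n, Z j ω|} ⊆
      (⋃ j ∈ Finset.range n, {ω | a < |Z j ω|}) ∪
      ({ω | c/2 ≤ ∑ j ∈ Finset.range n, U j ω} ∪
       {ω | c/2 ≤ ∑ j ∈ Finset.range n, -U j ω}) := by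
    intro ω hω
    simp only [Set.mem_setOf_eq] at hω
    by_cases hex : ∀ j ∈ Finset.range n, |Z j ω| ≤ a
    · right
      have hsumφ : ∑ j ∈ Finset.range n, φ (Z j ω) = ∑ j ∈ Finset.range n, Z j ω :=
        Finset.sum_congr rfl fun j hj => by simp only [hφ, if_pos (hex j hj)]
      have hsum : ∑ j ∈ Finset.range n, U j ω
          = (∑ j ∈ Finset.range n, Z j ω) - n * m := by
        simp only [hU]
        rw [Finset.sum_sub_distrib, Finset.sum_const, Finset.card_range, nsmul_eq_mul, hsumφ]
      have hnm : |(n:ℝ) * m| ≤ c/2 := by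
        rw [abs_mul, Nat.abs_cast]
        calc (n:ℝ) * |m| ≤ (n:ℝ) * (R / a ^ (r-1)) := by
              gcongr
          _ ≤ c/2 := hshift
      have h1 : c/2 ≤ |∑ j ∈ Finset.range n, U j ω| := by
        rw [hsum]
        have := abs_sub_abs_le_abs_sub (∑ j ∈ Finset.range n, Z j ω) ((n:ℝ) * m)
        have h2 := abs_le.1 hnm
        calc c/2 = c - c/2 := by ring
          _ ≤ |∑ j ∈ Finset.range n, Z j ω| - |(n:ℝ) * m| := by
              exact sub_le_sub hω hnm
          _ ≤ |∑ j ∈ Finset.range n, Z j ω - (n:ℝ) * m| := this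
      rcases le_abs.1 h1 with h | h
      · left; exact h
      · right
        simp only [Set.mem_setOf_eq, Finset.sum_neg_distrib]
        exact h
    · left
      push_neg at hex
      obtain ⟨j, hj, hja⟩ := hex
      exact Set.mem_biUnion hj hja
  -- bounding each piece
  have hmarkov : ∀ j, P {ω | a < |Z j ω|} ≤ ENNReal.ofReal (R / a ^ r) := by
    intro j
    have hs : MeasurableSet {x : ℝ | a < |x|} :=
      measurableSet_lt measurable_const measurable_id.abs
    have hmapeq : P {ω | a < |Z j ω|} = P {ω | a < |W ω|} := by
      have e1 : {ω | a < |Z j ω|} = Z j ⁻¹' {x | a < |x|} := rfl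
      have e2 : {ω | a < |W ω|} = W ⁻¹' {x | a < |x|} := rfl
      rw [e1, e2, ← Measure.map_apply (hZm j) hs, ← Measure.map_apply hWm hs, (hid j).map_eq]
    rw [hmapeq]
    have hsub : {ω | a < |W ω|} ⊆ {ω | a ^ r ≤ |W ω| ^ r} := by
      intro ω hω
      exact Real.rpow_le_rpow ha0.le (le_of_lt hω) (by linarith)
    have har : (0:ℝ) < a ^ r := Real.rpow_pos_of_pos ha0 r
    have hmark := mul_meas_ge_le_integral_of_nonneg
      (ae_of_all P fun ω => Real.rpow_nonneg (abs_nonneg (W ω)) r) hmom (a ^ r)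
    have htr : (P {ω | a ^ r ≤ |W ω| ^ r}).toReal ≤ R / a ^ r := by
      rw [le_div_iff₀ har, mul_comm]
      exact hmark
    calc P {ω | a < |W ω|} ≤ P {ω | a ^ r ≤ |W ω| ^ r} := measure_mono hsub
      _ ≤ ENNReal.ofReal (R / a ^ r) := by
          rw [ENNReal.le_ofReal_iff_toReal_le (measure_ne_top _ _) (by positivity)]
          exact htr
  set e : ℝ := Real.exp (-(t*(c/2)) + n * t^2) with he
  have hbern1 : P {ω | c/2 ≤ ∑ j ∈ Finset.range n, U j ω} ≤ ENNReal.ofReal e :=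
    bern_sum P U n (by linarith : (0:ℝ) < 2*a) hUm hUind hUbd hUmean hUvar ht0 htb (c/2)
  have hbern2 : P {ω | c/2 ≤ ∑ j ∈ Finset.range n, -U j ω} ≤ ENNReal.ofReal e := by
    have hNm : ∀ j, Measurable (fun ω => -U j ω) := fun j => (hUm j).neg
    have hNind : iIndepFun
        (fun j ω => -U j ω) P :=
      hUind.comp (fun _ => Neg.neg) fun _ => measurable_neg
    exact bern_sum P (fun j ω => -U j ω) n (by linarith : (0:ℝ) < 2*a) hNm hNind
      (fun j ω => by rw [abs_neg]; exact hUbd j ω)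
      (fun j => by rw [integral_neg, hUmean j, neg_zero])
      (fun j => by simpa [neg_sq] using hUvar j) ht0 htb (c/2)
  calc P {ω | c ≤ |∑ j ∈ Finset.range n, Z j ω|}
      ≤ P ((⋃ j ∈ Finset.range n, {ω | a < |Z j ω|}) ∪
        ({ω | c/2 ≤ ∑ j ∈ Finset.range n, U j ω} ∪
         {ω | c/2 ≤ ∑ j ∈ Finset.range n, -U j ω})) := measure_mono hincl
    _ ≤ P (⋃ j ∈ Finset.range n, {ω | a < |Z j ω|}) +
        (P {ω | c/2 ≤ ∑ j ∈ Finset.range n, U j ω} +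
         P {ω | c/2 ≤ ∑ j ∈ Finset.range n, -U j ω}) :=
      le_trans (measure_union_le _ _) (by gcongr; exact measure_union_le _ _)
    _ ≤ (∑ j ∈ Finset.range n, ENNReal.ofReal (R / a ^ r)) +
        (ENNReal.ofReal e + ENNReal.ofReal e) := by
      exact add_le_add
        (le_trans (measure_biUnion_finset_le _ _) (Finset.sum_le_sum fun j _ => hmarkov j))
        (add_le_add hbern1 hbern2)
    _ = ENNReal.ofReal ((n:ℝ) * (R / a ^ r) + 2 * e) := by
      rw [Finset.sum_const, Finset.card_range, nsmul_eq_mul,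
        ← ENNReal.ofReal_add (by positivity) (Real.exp_nonneg _),
        ← ENNReal.ofReal_natCast n,
        ← ENNReal.ofReal_mul (Nat.cast_nonneg n),
        ← ENNReal.ofReal_add (by positivity) (by positivity)]
      congr 1
      rw [he]; ring

lemma nat_mul_exp_tendsto (c0 e0 : ℝ) (hc0 : 0 < c0) (he0 : 0 < e0) :
    Tendsto (fun N : ℕ => (N:ℝ) * Real.exp (-c0 * (N:ℝ)^e0)) atTop (𝓝 0) := by
  have h1 := tendsto_rpow_mul_exp_neg_mul_atTop_nhds_zero (1/e0) c0 hc0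
  have h2 : Tendsto (fun N : ℕ => ((N:ℝ)^e0)) atTop atTop :=
    (tendsto_rpow_atTop he0).comp tendsto_natCast_atTop_atTop
  have h3 := h1.comp h2
  have heq : (fun N : ℕ => ((N:ℝ)^e0)^(1/e0) * Real.exp (-c0 * (N:ℝ)^e0))
      = fun N : ℕ => (N:ℝ) * Real.exp (-c0 * (N:ℝ)^e0) := by
    funext N
    congr 1
    rw [← Real.rpow_mul (Nat.cast_nonneg N)]
    rw [show e0 * (1/e0) = 1 by field_simp, Real.rpow_one]
  rw [← heq]
  exact h3

/-- **Lemma 2.** For an i.i.d. array `Y_{ij}` with mean 0, variance 1 and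
`E|Y_{11}|^r < ∞` for some `r ≥ 3`, setting `X_{in} = n^{-1/2} Σ_{j<n} Y_{ij}`, one has
`max_{i<n} |X_{in}| = O_p(n^{1/(2r)+ε})` for every `ε > 0`; in particular, for every
`α > 0`, `P(max_{i<n} |X_{in}| ≥ α n^{1/(2r)+ε}) → 0`. -/
theorem max_row_sum_big_O_p
    {Ω : Type} [MeasurableSpace Ω] (P : Measure Ω) [IsProbabilityMeasure P]
    (Y : ℕ → ℕ → Ω → ℝ)
    (hmeas : ∀ i j, Measurable (Y i j))
    (hiid : iIndepFun
      (fun p : ℕ × ℕ => Y p.1 p.2) P)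
    (hident : ∀ p q : ℕ × ℕ, IdentDistrib (Y p.1 p.2) (Y q.1 q.2) P P)
    (hmean : ∫ ω, Y 0 0 ω ∂P = 0)
    (hvar : ∫ ω, (Y 0 0 ω) ^ 2 ∂P = 1)
    (r : ℝ) (hr : 3 ≤ r)
    (hmom : Integrable (fun ω => |Y 0 0 ω| ^ r) P)
    (ε : ℝ) (hε : 0 < ε) :
    (∀ δ : ℝ, 0 < δ → ∃ M : ℝ, 0 < M ∧ ∀ᶠ N : ℕ in atTop,
        P {ω | M * (N : ℝ) ^ (1 / (2 * r) + ε) <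
            ⨆ i ∈ Finset.range N,
              |(∑ j ∈ Finset.range N, Y i j ω) / Real.sqrt (N : ℝ)|} < ENNReal.ofReal δ)
    ∧
    (∀ α : ℝ, 0 < α →
      Tendsto (fun N : ℕ =>
          P {ω | α * (N : ℝ) ^ (1 / (2 * r) + ε) ≤
              ⨆ i ∈ Finset.range N,
                |(∑ j ∈ Finset.range N, Y i j ω) / Real.sqrt (N : ℝ)|})
        atTop (𝓝 0)) := by
  have hrpos : (0:ℝ) < r := by linarith
  set W : Ω → ℝ := Y 0 0 with hWdef
  have hWm : Measurable W := hmeas 0 0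
  set R : ℝ := ∫ ω, |W ω| ^ r ∂P with hRdef
  have hR0 : 0 ≤ R := integral_nonneg fun ω => Real.rpow_nonneg (abs_nonneg _) _
  have hsum_int : Integrable (fun ω => 1 + |W ω| ^ r) P := (integrable_const 1).add hmom
  have hpt1 : ∀ x : ℝ, |x| ≤ 1 + |x| ^ r := by
    intro x
    by_cases h1 : |x| ≤ 1
    · have : (0:ℝ) ≤ |x| ^ r := Real.rpow_nonneg (abs_nonneg _) _
      linarith
    · push_neg at h1
      have h0 : |x| = |x| ^ (1:ℝ) := (Real.rpow_one _).symm
      have h2 : |x| ^ (1:ℝ) ≤ |x| ^ r :=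
        Real.rpow_le_rpow_of_exponent_le h1.le (by linarith)
      exact (h0.le.trans h2).trans (le_add_of_nonneg_left zero_le_one)
  have hpt2 : ∀ x : ℝ, x ^ 2 ≤ 1 + |x| ^ r := by
    intro x
    by_cases h1 : |x| ≤ 1
    · have h2 : x^2 ≤ 1 := by nlinarith [abs_nonneg x, sq_abs x]
      have : (0:ℝ) ≤ |x| ^ r := Real.rpow_nonneg (abs_nonneg _) _
      linarith
    · push_neg at h1
      have h2 : |x| ^ ((2:ℕ):ℝ) ≤ |x| ^ r :=
        Real.rpow_le_rpow_of_exponent_le h1.le (by push_cast; linarith)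
      rw [Real.rpow_natCast] at h2
      have h3 : x^2 = |x|^2 := (sq_abs x).symm
      exact (h3.le.trans h2).trans (le_add_of_nonneg_left zero_le_one)
  have hWint : Integrable W P := by
    refine Integrable.mono' hsum_int hWm.aestronglyMeasurable (ae_of_all _ fun ω => ?_)
    rw [Real.norm_eq_abs]; exact hpt1 (W ω)
  have hW2 : Integrable (fun ω => (W ω) ^ 2) P := by
    refine Integrable.mono' hsum_int (hWm.pow_const 2).aestronglyMeasurable
      (ae_of_all _ fun ω => ?_)
    rw [Real.norm_eq_abs, abs_of_nonneg (sq_nonneg _)]; exact hpt2 (W ω)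
  set β : ℝ := 1/(2*r) + ε with hβdef
  have hβpos : 0 < β := by positivity
  set γ : ℝ := 2/r + ε/2 with hγdef
  have hγpos : 0 < γ := by positivity
  set e1 : ℝ := β + 1/2 - γ with he1def
  have he1pos : 0 < e1 := by
    have hkey : e1 * (2*r) = r - 3 + r*ε := by
      rw [he1def, hβdef, hγdef]; field_simp; ring
    nlinarith [mul_pos hrpos hε]
  set q : ℝ := β + 1/2 + γ*(r-1) - 1 with hqdef
  have hqpos : 0 < q := by
    have hkey : q * (2*r) = 3*r - 3 + r*ε + ε*r^2 := by
      rw [hqdef, hβdef, hγdef]; field_simp; ring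
    nlinarith [mul_pos hrpos hε, mul_pos (mul_pos hε hrpos) hrpos]
  -- the main tendsto statement
  have main : ∀ α : ℝ, 0 < α →
      Tendsto (fun N : ℕ =>
          P {ω | α * (N : ℝ) ^ (1 / (2 * r) + ε) ≤
              ⨆ i ∈ Finset.range N,
                |(∑ j ∈ Finset.range N, Y i j ω) / Real.sqrt (N : ℝ)|})
        atTop (𝓝 0) := by
    intro α hα
    set g : ℕ → ℝ := fun N => R * (N:ℝ)^(-(r*ε/2)) +
        (2*((N:ℝ) * Real.exp (-(α/16) * (N:ℝ)^e1)) +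
         2*((N:ℝ) * Real.exp (-(α^2/64) * (N:ℝ)^(2*β)))) with hgdef
    have hgto : Tendsto g atTop (𝓝 0) := by
      have l1 : Tendsto (fun N : ℕ => R * (N:ℝ)^(-(r*ε/2))) atTop (𝓝 0) := by
        have h := (tendsto_rpow_neg_atTop (y := r*ε/2) (by positivity)).comp
          (tendsto_natCast_atTop_atTop (R := ℝ))
        have h2 := h.const_mul R
        rw [mul_zero] at h2
        exact h2
      have l2 : Tendsto (fun N : ℕ => 2*((N:ℝ) * Real.exp (-(α/16) * (N:ℝ)^e1)))
          atTop (𝓝 0) := by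
        have h2 := (nat_mul_exp_tendsto (α/16) e1 (by positivity) he1pos).const_mul 2
        rw [mul_zero] at h2
        exact h2
      have l3 : Tendsto (fun N : ℕ => 2*((N:ℝ) * Real.exp (-(α^2/64) * (N:ℝ)^(2*β))))
          atTop (𝓝 0) := by
        have h2 := (nat_mul_exp_tendsto (α^2/64) (2*β) (by positivity) (by positivity)).const_mul 2
        rw [mul_zero] at h2
        exact h2
      have htot := l1.add (l2.add l3)
      rw [add_zero, add_zero] at htot
      exact htot
    have hq_ev : ∀ᶠ N : ℕ in atTop, 4*R/α ≤ (N:ℝ)^q :=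
      ((tendsto_rpow_atTop hqpos).comp
        (tendsto_natCast_atTop_atTop (R := ℝ))).eventually_ge_atTop (4*R/α)
    have hbound : ∀ᶠ N : ℕ in atTop,
        P {ω | α * (N : ℝ) ^ (1 / (2 * r) + ε) ≤
            ⨆ i ∈ Finset.range N,
              |(∑ j ∈ Finset.range N, Y i j ω) / Real.sqrt (N : ℝ)|}
          ≤ ENNReal.ofReal (g N) := by
      filter_upwards [eventually_ge_atTop 1, hq_ev] with N hN1 hqN
      have hx1 : (1:ℝ) ≤ (N:ℝ) := by exact_mod_cast hN1
      have hx0 : (0:ℝ) < (N:ℝ) := by linarith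
      have hxne : (N:ℝ) ≠ 0 := ne_of_gt hx0
      rw [← hβdef]
      set a : ℝ := (N:ℝ) ^ γ with hadef
      have ha1 : (1:ℝ) ≤ a := by
        rw [hadef]
        calc (1:ℝ) = (N:ℝ) ^ (0:ℝ) := (Real.rpow_zero _).symm
        _ ≤ (N:ℝ) ^ γ := Real.rpow_le_rpow_of_exponent_le hx1 hγpos.le
      have ha0 : (0:ℝ) < a := lt_of_lt_of_le one_pos ha1
      set c : ℝ := α/2 * (N:ℝ) ^ β * Real.sqrt (N:ℝ) with hcdef
      have hsqrtpos : 0 < Real.sqrt (N:ℝ) := Real.sqrt_pos.2 hx0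
      have hc0 : 0 ≤ c := by positivity
      have hsqrteq : Real.sqrt (N:ℝ) = (N:ℝ) ^ ((1:ℝ)/2) := Real.sqrt_eq_rpow _
      set t : ℝ := min (1/(2*a)) ((c/2)/(2*(N:ℝ))) with htdef
      have ht0 : 0 ≤ t := le_min (by positivity) (by positivity)
      have htb : t * (2*a) ≤ 1 := by
        have h1 : t ≤ 1/(2*a) := min_le_left _ _
        calc t * (2*a) ≤ (1/(2*a)) * (2*a) :=
              mul_le_mul_of_nonneg_right h1 (by linarith)
        _ = 1 := by field_simp
      have hRq : R ≤ α/4 * (N:ℝ)^q := by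
        rw [div_le_iff₀ hα] at hqN
        linarith
      have hDpos : (0:ℝ) < (N:ℝ) ^ (γ*(r-1)) := Real.rpow_pos_of_pos hx0 _
      have hD : a ^ (r-1) = (N:ℝ) ^ (γ*(r-1)) := by
        rw [hadef, ← Real.rpow_mul hx0.le]
      have hq1 : (N:ℝ) ^ q * (N:ℝ)
          = (N:ℝ) ^ β * (N:ℝ) ^ ((1:ℝ)/2) * (N:ℝ) ^ (γ*(r-1)) := by
        have h2 : (N:ℝ) ^ q * (N:ℝ) = (N:ℝ) ^ (q+1) := by
          have h := Real.rpow_add hx0 q 1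
          rw [Real.rpow_one] at h
          exact h.symm
        rw [h2, show q + 1 = β + (1:ℝ)/2 + γ*(r-1) by rw [hqdef]; ring,
          Real.rpow_add hx0, Real.rpow_add hx0]
      have hshiftN : (N:ℝ) * (R / a ^ (r-1)) ≤ c/2 := by
        rw [hD, ← mul_div_assoc, div_le_iff₀ hDpos, hcdef, hsqrteq]
        calc (N:ℝ) * R ≤ (N:ℝ) * (α/4 * (N:ℝ)^q) :=
              mul_le_mul_of_nonneg_left hRq hx0.le
        _ = α/4 * ((N:ℝ)^q * (N:ℝ)) := by ring
        _ = α/4 * ((N:ℝ)^β * (N:ℝ)^((1:ℝ)/2) * (N:ℝ)^(γ*(r-1))) := by rw [hq1]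
        _ = α/2 * (N:ℝ)^β * (N:ℝ)^((1:ℝ)/2) / 2 * (N:ℝ)^(γ*(r-1)) := by ring
      have hrow : ∀ i : ℕ, P {ω | c ≤ |∑ j ∈ Finset.range N, Y i j ω|} ≤
          ENNReal.ofReal ((N:ℝ) * (R / a ^ r) + 2 * Real.exp (-(t*(c/2)) + (N:ℝ) * t^2)) :=
        fun i => row_bound P W hWm hmean hWint hW2 hvar r hr hmom
          (fun j => Y i j) (fun j => hmeas i j) (row_indep hiid i)
          (fun j => hident (i, j) (0, 0)) N a c ha1 hshiftN ht0 htb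
      have hsub : {ω | α * (N:ℝ) ^ β ≤ ⨆ i ∈ Finset.range N,
            |(∑ j ∈ Finset.range N, Y i j ω) / Real.sqrt (N:ℝ)|}
          ⊆ ⋃ i ∈ Finset.range N, {ω | c ≤ |∑ j ∈ Finset.range N, Y i j ω|} := by
        intro ω hω
        simp only [Set.mem_setOf_eq] at hω
        by_contra hno
        simp only [Set.mem_iUnion, Set.mem_setOf_eq, not_exists] at hno
        push_neg at hno
        have hxb : (0:ℝ) < (N:ℝ) ^ β := Real.rpow_pos_of_pos hx0 _
        have hsup : (⨆ i ∈ Finset.range N,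
            |(∑ j ∈ Finset.range N, Y i j ω) / Real.sqrt (N:ℝ)|) ≤ α/2 * (N:ℝ)^β := by
          apply Real.iSup_le _ (by positivity)
          intro i
          by_cases hi : i ∈ Finset.range N
          · rw [ciSup_pos hi, abs_div, abs_of_nonneg (Real.sqrt_nonneg _),
              div_le_iff₀ hsqrtpos]
            have h := (hno i hi).le
            rw [hcdef] at h
            exact h
          · haveI : IsEmpty (i ∈ Finset.range N) := ⟨hi⟩
            rw [Real.iSup_of_isEmpty]
            positivity
        have hcontr : α * (N:ℝ)^β ≤ α/2 * (N:ℝ)^β := le_trans hω hsup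
        nlinarith
      have hterm1 : (N:ℝ) * ((N:ℝ) * (R / a ^ r)) = R * (N:ℝ) ^ (-(r*ε/2)) := by
        have hgr : γ * r = 2 + r*ε/2 := by rw [hγdef]; field_simp
        have h1 : a ^ r = ((N:ℝ) * (N:ℝ)) * (N:ℝ) ^ (r*ε/2) := by
          rw [hadef, ← Real.rpow_mul hx0.le, hgr, Real.rpow_add hx0]
          congr 1
          rw [show (2:ℝ) = ((2:ℕ):ℝ) by norm_num, Real.rpow_natCast]
          ring
        have hpos : (0:ℝ) < (N:ℝ) ^ (r*ε/2) := Real.rpow_pos_of_pos hx0 _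
        rw [h1, Real.rpow_neg hx0.le]
        field_simp
      have hxt : (N:ℝ) * t ≤ c/4 := by
        calc (N:ℝ) * t ≤ (N:ℝ) * ((c/2)/(2*(N:ℝ))) :=
              mul_le_mul_of_nonneg_left (min_le_right _ _) hx0.le
        _ = c/4 := by field_simp; ring
      have hE : -(t*(c/2)) + (N:ℝ) * t^2 ≤ -((c/4)*t) := by
        nlinarith [mul_le_mul_of_nonneg_right hxt ht0]
      have hExp : Real.exp (-(t*(c/2)) + (N:ℝ)*t^2) ≤
          Real.exp (-(α/16) * (N:ℝ)^e1) + Real.exp (-(α^2/64) * (N:ℝ)^(2*β)) := by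
        rcases min_cases (1/(2*a)) ((c/2)/(2*(N:ℝ))) with ⟨h1,_⟩ | ⟨h1,_⟩
        · have hsplit : (N:ℝ) ^ e1 = (N:ℝ)^β * (N:ℝ)^((1:ℝ)/2) / (N:ℝ)^γ := by
            rw [he1def, Real.rpow_sub hx0, Real.rpow_add hx0]
          have hγpos' : (0:ℝ) < (N:ℝ)^γ := Real.rpow_pos_of_pos hx0 _
          have hct : (c/4) * t = α/16 * (N:ℝ)^e1 := by
            rw [htdef, h1, hcdef, hadef, hsqrteq, hsplit]
            field_simp
            ring
          calc Real.exp (-(t*(c/2)) + (N:ℝ)*t^2) ≤ Real.exp (-((c/4)*t)) :=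
                Real.exp_le_exp.2 hE
            _ = Real.exp (-(α/16) * (N:ℝ)^e1) := by rw [hct, neg_mul]
            _ ≤ _ := le_add_of_nonneg_right (Real.exp_nonneg _)
        · have h2b : (N:ℝ)^β * (N:ℝ)^β = (N:ℝ)^(2*β) := by
            rw [← Real.rpow_add hx0]; ring_nf
          have hss : Real.sqrt (N:ℝ) * Real.sqrt (N:ℝ) = (N:ℝ) :=
            Real.mul_self_sqrt hx0.le
          have hct : (c/4) * t = α^2/64 * (N:ℝ)^(2*β) := by
            rw [htdef, h1, hcdef]
            have hexpand : α/2 * (N:ℝ)^β * Real.sqrt (N:ℝ) / 4 *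
                ((α/2 * (N:ℝ)^β * Real.sqrt (N:ℝ) / 2) / (2*(N:ℝ)))
                = α^2/64 * (((N:ℝ)^β * (N:ℝ)^β) *
                    (Real.sqrt (N:ℝ) * Real.sqrt (N:ℝ)) / (N:ℝ)) := by
              field_simp
              ring
            rw [hexpand, hss, h2b, mul_div_assoc, div_self hxne, mul_one]
          calc Real.exp (-(t*(c/2)) + (N:ℝ)*t^2) ≤ Real.exp (-((c/4)*t)) :=
                Real.exp_le_exp.2 hE
            _ = Real.exp (-(α^2/64) * (N:ℝ)^(2*β)) := by rw [hct, neg_mul]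
            _ ≤ _ := le_add_of_nonneg_left (Real.exp_nonneg _)
      have hreal : (N:ℝ) * ((N:ℝ) * (R / a ^ r) + 2 * Real.exp (-(t*(c/2)) + (N:ℝ) * t^2))
          ≤ g N := by
        simp only [hgdef]
        have hmul : (N:ℝ) * Real.exp (-(t*(c/2)) + (N:ℝ)*t^2) ≤
            (N:ℝ) * Real.exp (-(α/16) * (N:ℝ)^e1) +
            (N:ℝ) * Real.exp (-(α^2/64) * (N:ℝ)^(2*β)) := by
          have h := mul_le_mul_of_nonneg_left hExp hx0.le
          rw [mul_add] at h
          exact h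
        calc (N:ℝ) * ((N:ℝ) * (R / a ^ r) + 2 * Real.exp (-(t*(c/2)) + (N:ℝ) * t^2))
            = (N:ℝ) * ((N:ℝ) * (R / a ^ r))
              + 2 * ((N:ℝ) * Real.exp (-(t*(c/2)) + (N:ℝ) * t^2)) := by ring
          _ ≤ R * (N:ℝ)^(-(r*ε/2)) +
              (2*((N:ℝ) * Real.exp (-(α/16) * (N:ℝ)^e1)) +
               2*((N:ℝ) * Real.exp (-(α^2/64) * (N:ℝ)^(2*β)))) := by
              rw [hterm1]
              linarith
      calc P {ω | α * (N:ℝ) ^ β ≤ ⨆ i ∈ Finset.range N,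
            |(∑ j ∈ Finset.range N, Y i j ω) / Real.sqrt (N:ℝ)|}
          ≤ P (⋃ i ∈ Finset.range N, {ω | c ≤ |∑ j ∈ Finset.range N, Y i j ω|}) :=
            measure_mono hsub
        _ ≤ ∑ i ∈ Finset.range N, P {ω | c ≤ |∑ j ∈ Finset.range N, Y i j ω|} :=
            measure_biUnion_finset_le _ _
        _ ≤ ∑ i ∈ Finset.range N, ENNReal.ofReal
              ((N:ℝ) * (R / a ^ r) + 2 * Real.exp (-(t*(c/2)) + (N:ℝ) * t^2)) :=
            Finset.sum_le_sum fun i _ => hrow i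
        _ = ENNReal.ofReal ((N:ℝ) * ((N:ℝ) * (R / a ^ r)
              + 2 * Real.exp (-(t*(c/2)) + (N:ℝ) * t^2))) := by
            rw [Finset.sum_const, Finset.card_range, nsmul_eq_mul,
              ← ENNReal.ofReal_natCast N, ← ENNReal.ofReal_mul (Nat.cast_nonneg N)]
        _ ≤ ENNReal.ofReal (g N) := ENNReal.ofReal_le_ofReal hreal
    refine tendsto_of_tendsto_of_tendsto_of_le_of_le' tendsto_const_nhds
      ?_ (Eventually.of_forall fun N => zero_le) hbound
    have h4 := ENNReal.tendsto_ofReal hgto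
    simpa using h4
  refine ⟨?_, main⟩
  intro δ hδ
  refine ⟨1, one_pos, ?_⟩
  have h2 := main 1 one_pos
  have hev := h2.eventually_lt_const (ENNReal.ofReal_pos.2 hδ)
  filter_upwards [hev] with N hN
  have hsub : {ω | 1 * (N:ℝ)^(1/(2*r)+ε) <
        ⨆ i ∈ Finset.range N, |(∑ j ∈ Finset.range N, Y i j ω)/Real.sqrt (N:ℝ)|} ⊆
      {ω | 1 * (N:ℝ)^(1/(2*r)+ε) ≤
        ⨆ i ∈ Finset.range N, |(∑ j ∈ Finset.range N, Y i j ω)/Real.sqrt (N:ℝ)|} :=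
    by intro ω hω; simp only [Set.mem_setOf_eq] at hω ⊢; exact le_of_lt hω
  exact lt_of_le_of_lt (measure_mono hsub) hN
end

section
/- Let ν be a real random variable with E(ν) = 0 and E(ν⁴) < ∞. Let U = (u_1,…,u_T) and V = (v_1,…,v_T) be independent random vectors whose entries are i.i.d. copies of ν, and let x = (x_1,…,x_T) ∈ R^T be a deterministic vector. Then E[(U·V)²(U·x)²] = E(ν²)·{E(ν⁴) + (T−1)[E(ν²)]²}·Σ_{t=1}^T x_t². -/
open MeasureTheory ProbabilityTheory Filter
open scoped BigOperators NNReal ENNReal Topology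

lemma aux_integral_prod {Ω ι : Type} [MeasurableSpace Ω] (P : Measure Ω)
    [IsProbabilityMeasure P] (f : ι → Ω → ℝ) (hmeas : ∀ i, Measurable (f i))
    (hindep : iIndepFun f P)
    (hint : ∀ i, Integrable (f i) P) (s : Finset ι) :
    Integrable (fun ω => ∏ i ∈ s, f i ω) P ∧
      (∫ ω, ∏ i ∈ s, f i ω ∂P) = ∏ i ∈ s, ∫ ω, f i ω ∂P := by
  classical
  induction s using Finset.induction_on with
  | empty => simp
  | @insert i s hi ih =>
    have hind : IndepFun (f i) (∏ j ∈ s, f j) P :=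
      (hindep.indepFun_finsetProd_of_notMem hmeas hi).symm
    have hps : (∏ j ∈ s, f j) = fun ω => ∏ j ∈ s, f j ω := by
      funext ω; simp
    rw [hps] at hind
    have hint2 : Integrable (fun ω => f i ω * ∏ j ∈ s, f j ω) P :=
      hind.integrable_mul (hint i) ih.1
    constructor
    · simpa [Finset.prod_insert hi] using hint2
    · rw [show (fun ω => ∏ j ∈ insert i s, f j ω) = fun ω => f i ω * ∏ j ∈ s, f j ω
        from by funext ω; rw [Finset.prod_insert hi]] at *
      rw [Finset.prod_insert hi, ← ih.2]
      simpa using IndepFun.integral_fun_mul_eq_mul_integral hind (hint i).aestronglyMeasurable ih.1.aestronglyMeasurable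

/-- Moment identity: if `U = (u_1,…,u_T)` and `V = (v_1,…,v_T)` have i.i.d. entries
distributed as a centred `ν` with finite fourth moment (all `2T` entries independent),
and `x ∈ ℝ^T` is deterministic, then
`E[(U·V)²(U·x)²] = E(ν²)·{E(ν⁴) + (T−1)[E(ν²)]²}·Σ_t x_t²`. -/
theorem moment_identity_inner_products
    {Ω : Type} [MeasurableSpace Ω] (P : Measure Ω) [IsProbabilityMeasure P]
    (T : ℕ) (w : Fin T ⊕ Fin T → Ω → ℝ) (ν₀ : Ω → ℝ)
    (hν₀ : Measurable ν₀)
    (hmeas : ∀ j, Measurable (w j))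
    (hindep : iIndepFun w P)
    (hident : ∀ j, IdentDistrib (w j) ν₀ P P)
    (hmean : ∫ ω, ν₀ ω ∂P = 0)
    (hmom4 : Integrable (fun ω => (ν₀ ω) ^ 4) P)
    (x : Fin T → ℝ) :
    ∫ ω, (∑ t, w (Sum.inl t) ω * w (Sum.inr t) ω) ^ 2 *
        (∑ t, w (Sum.inl t) ω * x t) ^ 2 ∂P
      = (∫ ω, (ν₀ ω) ^ 2 ∂P) *
          ((∫ ω, (ν₀ ω) ^ 4 ∂P) + ((T : ℝ) - 1) * (∫ ω, (ν₀ ω) ^ 2 ∂P) ^ 2) *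
          (∑ t, (x t) ^ 2) := by
  classical
  set m : ℕ → ℝ := fun k => ∫ ω, ν₀ ω ^ k ∂P with hm
  have hm0 : m 0 = 1 := by simp [hm]
  have hm1 : m 1 = 0 := by simpa [hm] using hmean
  -- integrability of moments up to 4
  have hνint : ∀ k, k ≤ 4 → Integrable (fun ω => ν₀ ω ^ k) P := by
    intro k hk
    refine Integrable.mono (hmom4.add (integrable_const 1)) ((hν₀.pow_const k).aestronglyMeasurable) ?_
    filter_upwards with ω
    have h4 : (0:ℝ) ≤ ν₀ ω ^ 4 := by positivity
    have h44 : |ν₀ ω| ^ 4 = ν₀ ω ^ 4 := by rw [← abs_pow, abs_of_nonneg h4]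
    simp only [Pi.add_apply, Real.norm_eq_abs, abs_pow]
    rw [abs_of_nonneg (by linarith : (0:ℝ) ≤ ν₀ ω ^ 4 + 1)]
    rcases le_total (|ν₀ ω|) 1 with h | h
    · have : |ν₀ ω| ^ k ≤ 1 := pow_le_one₀ (abs_nonneg _) h
      linarith
    · have : |ν₀ ω| ^ k ≤ |ν₀ ω| ^ 4 := pow_le_pow_right₀ h hk
      linarith
  have hwid : ∀ (j) (k : ℕ), IdentDistrib (fun ω => w j ω ^ k) (fun ω => ν₀ ω ^ k) P P :=
    fun j k => (hident j).comp (measurable_id.pow_const k)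
  have hwint : ∀ (j) (k : ℕ), k ≤ 4 → Integrable (fun ω => w j ω ^ k) P := by
    intro j k hk
    exact ((hwid j k).integrable_iff).2 (hνint k hk)
  have hwmom : ∀ (j) (k : ℕ), (∫ ω, w j ω ^ k ∂P) = m k := fun j k => (hwid j k).integral_eq
  -- key: integral of monomials
  have key : ∀ e : (Fin T ⊕ Fin T) → ℕ, (∀ j, e j ≤ 4) →
      Integrable (fun ω => ∏ j, w j ω ^ e j) P ∧
        (∫ ω, ∏ j, w j ω ^ e j ∂P) = ∏ j, m (e j) := by
    intro e he
    have hindep' : iIndepFun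
        (fun j => fun ω => w j ω ^ e j) P :=
      hindep.comp (fun j => (· ^ e j)) (fun j => measurable_id.pow_const (e j))
    have := aux_integral_prod P (fun j ω => w j ω ^ e j)
      (fun j => (hmeas j).pow_const (e j)) hindep' (fun j => hwint j (e j) (he j)) Finset.univ
    refine ⟨this.1, this.2.trans ?_⟩
    exact Finset.prod_congr rfl fun j _ => hwmom j (e j)
  -- the exponent function of a generic term
  set E4 : Fin T → Fin T → Fin T → Fin T → (Fin T ⊕ Fin T) → ℕ := fun t t' s s' j =>
    (if j = Sum.inl t then 1 else 0) + (if j = Sum.inl t' then 1 else 0) +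
    (if j = Sum.inl s then 1 else 0) + (if j = Sum.inl s' then 1 else 0) +
    (if j = Sum.inr t then 1 else 0) + (if j = Sum.inr t' then 1 else 0) with hE4
  have hE4le : ∀ t t' s s' j, E4 t t' s s' j ≤ 4 := by
    intro t t' s s' j
    rcases j with a | a <;> simp [hE4] <;> split_ifs <;> omega
  have hinl : ∀ t t' s s' a, E4 t t' s s' (Sum.inl a) =
      (if a = t then 1 else 0) + (if a = t' then 1 else 0) +
      (if a = s then 1 else 0) + (if a = s' then 1 else 0) := by
    intro t t' s s' a; simp [hE4]
  have hinr : ∀ t t' s s' a, E4 t t' s s' (Sum.inr a) =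
      (if a = t then 1 else 0) + (if a = t' then 1 else 0) := by
    intro t t' s s' a; simp [hE4]
  have hprod : ∀ t t' s s' ω, (∏ j, w j ω ^ E4 t t' s s' j) =
      w (Sum.inl t) ω * w (Sum.inr t) ω * (w (Sum.inl t') ω * w (Sum.inr t') ω) *
        (w (Sum.inl s) ω * w (Sum.inl s') ω) := by
    intro t t' s s' ω
    simp only [hE4, pow_add, Finset.prod_mul_distrib, pow_ite, pow_one, pow_zero,
      Finset.prod_ite_eq', Finset.mem_univ, if_true]
    ring
  have prodm : ∀ t t' s s', (∏ j, m (E4 t t' s s' j)) =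
      if t' = t ∧ s' = s then m 2 * (if s = t then m 4 else m 2 ^ 2) else 0 := by
    intro t t' s s'
    rw [Fintype.prod_sum_type]
    by_cases htt : t' = t
    · subst htt
      have hR : (∏ a : Fin T, m (E4 t' t' s s' (Sum.inr a))) = m 2 := by
        have : ∀ a : Fin T, m (E4 t' t' s s' (Sum.inr a)) = (if a = t' then m 2 else 1) := by
          intro a; rw [hinr]; by_cases h : a = t' <;> simp [h, hm0]
        rw [Finset.prod_congr rfl (fun a _ => this a), Finset.prod_ite_eq']
        simp
      rw [hR]
      by_cases hss : s' = s
      · subst hss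
        by_cases hst : s' = t'
        · subst hst
          have hL : (∏ a : Fin T, m (E4 s' s' s' s' (Sum.inl a))) = m 4 := by
            have : ∀ a : Fin T, m (E4 s' s' s' s' (Sum.inl a)) = (if a = s' then m 4 else 1) := by
              intro a; rw [hinl]; by_cases h : a = s' <;> simp [h, hm0]
            rw [Finset.prod_congr rfl (fun a _ => this a), Finset.prod_ite_eq']
            simp
          rw [hL]
          simp [mul_comm]
        · have hL : (∏ a : Fin T, m (E4 t' t' s' s' (Sum.inl a))) = m 2 * m 2 := by
            have : ∀ a : Fin T, m (E4 t' t' s' s' (Sum.inl a)) =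
                (if a = t' then m 2 else 1) * (if a = s' then m 2 else 1) := by
              intro a; rw [hinl]
              by_cases h1 : a = t'
              · have h2' : ¬ t' = s' := fun h => hst h.symm
                simp [h1, h2']
              · by_cases h2 : a = s'
                · simp [h2, hst, hm0]
                · simp [h1, h2, hm0]
            rw [Finset.prod_congr rfl (fun a _ => this a), Finset.prod_mul_distrib,
              Finset.prod_ite_eq', Finset.prod_ite_eq']
            simp
          rw [hL, if_pos (And.intro rfl rfl : t' = t' ∧ s' = s'), if_neg hst]
          ring
      · have hL : (∏ a : Fin T, m (E4 t' t' s s' (Sum.inl a))) = 0 := by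
          by_cases hst : s = t'
          · refine Finset.prod_eq_zero (Finset.mem_univ s') ?_
            have h1 : ¬ s' = t' := fun h => hss (h.trans hst.symm)
            have h2 : ¬ s' = s := hss
            rw [hinl]; simp [h1, h2, hm1]
          · refine Finset.prod_eq_zero (Finset.mem_univ s) ?_
            have h2 : ¬ s = s' := fun h => hss h.symm
            rw [hinl]; simp [hst, h2, hm1]
        rw [hL]
        simp [hss]
    · have hR : (∏ a : Fin T, m (E4 t t' s s' (Sum.inr a))) = 0 := by
        refine Finset.prod_eq_zero (Finset.mem_univ t) ?_
        have h1 : ¬ t = t' := fun h => htt h.symm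
        rw [hinr]; simp [h1, hm1]
      rw [hR]
      simp [htt]
  have expand : ∀ ω, (∑ t, w (Sum.inl t) ω * w (Sum.inr t) ω) ^ 2 *
      (∑ t, w (Sum.inl t) ω * x t) ^ 2
      = ∑ s, ∑ s', ∑ t, ∑ t', (x s * x s') * ∏ j, w j ω ^ E4 t t' s s' j := by
    intro ω
    simp only [sq, Finset.sum_mul, Finset.mul_sum]
    refine Finset.sum_congr rfl fun s _ => Finset.sum_congr rfl fun s' _ =>
      Finset.sum_congr rfl fun t _ => Finset.sum_congr rfl fun t' _ => ?_
    rw [hprod]; ring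
  have pull : ∀ (f : Fin T → Ω → ℝ), (∀ a, Integrable (f a) P) →
      (∫ ω, ∑ a, f a ω ∂P) = ∑ a, ∫ ω, f a ω ∂P :=
    fun f hf => integral_finset_sum _ (fun a _ => hf a)
  have intterm : ∀ t t' s s',
      Integrable (fun ω => (x s * x s') * ∏ j, w j ω ^ E4 t t' s s' j) P :=
    fun t t' s s' => ((key _ (hE4le t t' s s')).1).const_mul _
  calc
    ∫ ω, (∑ t, w (Sum.inl t) ω * w (Sum.inr t) ω) ^ 2 *
        (∑ t, w (Sum.inl t) ω * x t) ^ 2 ∂P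
        = ∫ ω, ∑ s, ∑ s', ∑ t, ∑ t', (x s * x s') * ∏ j, w j ω ^ E4 t t' s s' j ∂P := by
          exact integral_congr_ae (Filter.Eventually.of_forall fun ω => expand ω)
    _ = ∑ s, ∑ s', ∑ t, ∑ t', (x s * x s') * ∏ j, m (E4 t t' s s' j) := by
          rw [pull _ (fun s => integrable_finset_sum _ fun s' _ => integrable_finset_sum _
            fun t _ => integrable_finset_sum _ fun t' _ => intterm t t' s s')]
          refine Finset.sum_congr rfl fun s _ => ?_
          rw [pull _ (fun s' => integrable_finset_sum _ fun t _ =>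
            integrable_finset_sum _ fun t' _ => intterm t t' s s')]
          refine Finset.sum_congr rfl fun s' _ => ?_
          rw [pull _ (fun t => integrable_finset_sum _ fun t' _ => intterm t t' s s')]
          refine Finset.sum_congr rfl fun t _ => ?_
          rw [pull _ (fun t' => intterm t t' s s')]
          refine Finset.sum_congr rfl fun t' _ => ?_
          rw [MeasureTheory.integral_const_mul, (key _ (hE4le t t' s s')).2]
    _ = ∑ s, ∑ t, (x s * x s) * (m 2 * (if s = t then m 4 else m 2 ^ 2)) := by
          refine Finset.sum_congr rfl fun s _ => ?_
          rw [Finset.sum_eq_single_of_mem s (Finset.mem_univ s) ?_]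
          · refine Finset.sum_congr rfl fun t _ => ?_
            rw [Finset.sum_eq_single_of_mem t (Finset.mem_univ t) ?_]
            · rw [prodm, if_pos ⟨rfl, rfl⟩]
            · intro t' _ ht'
              rw [prodm, if_neg (fun h => ht' h.1), mul_zero]
          · intro s' _ hs'
            apply Finset.sum_eq_zero; intro t _
            apply Finset.sum_eq_zero; intro t' _
            rw [prodm, if_neg (fun h => hs' h.2), mul_zero]
    _ = ∑ s, (x s * x s) * (m 2 * (m 4 + ((T : ℝ) - 1) * m 2 ^ 2)) := by
          refine Finset.sum_congr rfl fun s _ => ?_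
          have h1 : ∀ t : Fin T, (x s * x s) * (m 2 * (if s = t then m 4 else m 2 ^ 2))
              = (x s * x s) * (m 2 * m 2 ^ 2) +
                (if s = t then (x s * x s) * (m 2 * (m 4 - m 2 ^ 2)) else 0) := by
            intro t
            by_cases h : s = t <;> simp [h] <;> ring
          simp only [h1, Finset.sum_add_distrib, Finset.sum_const, Finset.sum_ite_eq,
            Finset.mem_univ, if_true, Finset.card_univ, Fintype.card_fin, nsmul_eq_mul]
          ring
    _ = (∫ ω, (ν₀ ω) ^ 2 ∂P) *
          ((∫ ω, (ν₀ ω) ^ 4 ∂P) + ((T : ℝ) - 1) * (∫ ω, (ν₀ ω) ^ 2 ∂P) ^ 2) *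
          (∑ t, (x t) ^ 2) := by
          rw [show (∫ ω, (ν₀ ω) ^ 2 ∂P) = m 2 from rfl,
            show (∫ ω, (ν₀ ω) ^ 4 ∂P) = m 4 from rfl, Finset.mul_sum]
          exact Finset.sum_congr rfl fun s _ => by ring
end
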